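/- The coproduct on the Connes-Kreimer Hopf algebra of rooted trees defined by the admissible-cut formula Δ(t) = 𝟙 ⊗ t + t ⊗ 𝟙 + Σ_{admissible cuts c} P_c(t) ⊗ R_c(t) is coassociative. -/

import Mathlib

open MvPolynomial TensorProduct

/-- Rooted trees: a root together with a list of subtrees. -/
inductive RT : Type
  | node : List RT → RT

/-- The free commutative algebra generated by rooted trees. -/
abbrev HCK : Type := MvPolynomial RT ℚ

mutual
/-- All ways of choosing, for each child of a vertex, either to cut the edge to that
child (the child then joins the pruned part) or to perform an admissible cut (possibly
empty) inside the child; returns the pruned part (a forest, as a monomial in `HCK`)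
and the list of surviving children. -/
noncomputable def childChoices : List RT → List (HCK × List RT)
  | [] => [(1, [])]
  | c :: rest =>
      ((childChoices rest).map fun pr => (X c * pr.1, pr.2)) ++
      ((allCuts c).flatMap fun qs =>
        (childChoices rest).map fun pr => (qs.1 * pr.1, qs.2 :: pr.2))
/-- All admissible cuts of a rooted tree (including the empty cut), each given by its
pruned part `P_c` (a forest) and its root part `R_c` (a tree). -/
noncomputable def allCuts : RT → List (HCK × RT)
  | .node l => (childChoices l).map fun pr =>
      (pr.1, .node (Multiset.toList (↑pr.2 : Multiset RT)))
end

/-- The coproduct on a single generator (tree) `t`, by the admissible-cut formula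
`Δ(t) = t ⊗ 𝟙 + Σ_{cuts c, incl. the empty cut} P_c(t) ⊗ R_c(t)`
(the empty cut contributes the term `𝟙 ⊗ t`). -/
noncomputable def deltaGen (t : RT) : HCK ⊗[ℚ] HCK :=
  X t ⊗ₜ[ℚ] 1 + ((allCuts t).map fun pr => pr.1 ⊗ₜ[ℚ] X pr.2).sum

/-- The admissible-cut coproduct `Δ`, extended to `HCK` as an algebra homomorphism. -/
noncomputable def delta : HCK →ₐ[ℚ] HCK ⊗[ℚ] HCK := aeval deltaGen

/-- The grafting operator `B₊`, sending a forest (monomial) `t₁⋯t_n` to the tree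
obtained by attaching the roots of `t₁,…,t_n` to a new root (and `B₊(𝟙) = •`). -/
noncomputable def Bplus : HCK →ₗ[ℚ] HCK :=
  (basisMonomials RT ℚ).constr ℚ
    fun m => (X (RT.node (Finsupp.toMultiset m).toList) : HCK)

/-! ### Auxiliary development -/

noncomputable instance : DecidableEq RT := Classical.decEq RT

/-- The forest polynomial of a list of trees. -/
noncomputable def fo (l : List RT) : HCK := (l.map X).prod

lemma fo_nil : fo [] = 1 := by simp [fo]

lemma fo_cons (c : RT) (l : List RT) : fo (c :: l) = X c * fo l := by simp [fo]

lemma fo_eq_monomial (l : List RT) :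
    fo l = monomial (Multiset.toFinsupp (↑l : Multiset RT)) 1 := by
  induction l with
  | nil => simp [fo]
  | cons c rest ih =>
      have h1 : (↑(c :: rest) : Multiset RT) = {c} + (↑rest : Multiset RT) := by
        simp [Multiset.cons_coe]
      rw [fo_cons, ih, h1, Multiset.toFinsupp_add, Multiset.toFinsupp_singleton]
      have hx : (X c : HCK) = monomial (Finsupp.single c 1) 1 := rfl
      rw [hx, monomial_mul, one_mul]

lemma Bplus_monomial (m : RT →₀ ℕ) :
    Bplus (monomial m 1) = X (RT.node (Finsupp.toMultiset m).toList) := by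
  have := Module.Basis.constr_basis (basisMonomials RT ℚ) ℚ
    (fun m => (X (RT.node (Finsupp.toMultiset m).toList) : HCK)) m
  rw [coe_basisMonomials] at this
  simpa [Bplus] using this

lemma Bplus_fo (l : List RT) :
    Bplus (fo l) = X (RT.node ((↑l : Multiset RT).toList)) := by
  rw [fo_eq_monomial, Bplus_monomial, Multiset.toFinsupp_toMultiset]

lemma fo_toList (m : RT →₀ ℕ) : fo (Finsupp.toMultiset m).toList = monomial m 1 := by
  rw [fo_eq_monomial, Multiset.coe_toList, Finsupp.toMultiset_toFinsupp]

lemma fo_perm (l : List RT) : fo ((↑l : Multiset RT).toList) = fo l := by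
  unfold fo
  have : ((↑l : Multiset RT).toList.map X : List HCK).prod
      = ((Multiset.map X (↑l : Multiset RT)).prod) := by
    rw [← Multiset.prod_coe]
    congr 1
    rw [← Multiset.map_coe, Multiset.coe_toList]
  rw [this, Multiset.map_coe, Multiset.prod_coe]

lemma childChoices_nil : childChoices [] = [(1, [])] := by rw [childChoices.eq_def]

lemma childChoices_cons (c : RT) (rest : List RT) :
    childChoices (c :: rest) =
      ((childChoices rest).map fun pr => (X c * pr.1, pr.2)) ++
      ((allCuts c).flatMap fun qs =>
        (childChoices rest).map fun pr => (qs.1 * pr.1, qs.2 :: pr.2)) := by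
  rw [childChoices.eq_def]

lemma allCuts_node (l : List RT) :
    allCuts (.node l) = (childChoices l).map fun pr =>
      (pr.1, .node (Multiset.toList (↑pr.2 : Multiset RT))) := by
  rw [allCuts.eq_def]

/-- Sum over child-choices. -/
noncomputable def Ssum (l : List RT) : HCK ⊗[ℚ] HCK :=
  ((childChoices l).map fun pr => pr.1 ⊗ₜ[ℚ] fo pr.2).sum

lemma list_sum_mul {α β M : Type*} [NonUnitalNonAssocSemiring M]
    (l1 : List α) (l2 : List β) (f : α → M) (g : β → M) :
    (l1.map f).sum * (l2.map g).sum
      = (l1.flatMap fun a => l2.map fun b => f a * g b).sum := by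
  induction l1 with
  | nil => simp
  | cons a t ih =>
      simp only [List.map_cons, List.sum_cons, List.flatMap_cons, List.sum_append,
        add_mul, ih]
      congr 1
      rw [← List.sum_map_mul_left]

lemma delta_one_tmul_mul (a : HCK) (l : List (HCK × List RT)) :
    (a ⊗ₜ[ℚ] (1:HCK)) * ((l.map fun pr => pr.1 ⊗ₜ[ℚ] fo pr.2).sum)
      = ((l.map fun pr => (a * pr.1) ⊗ₜ[ℚ] fo pr.2).sum) := by
  rw [← List.sum_map_mul_left]
  congr 1
  apply List.map_congr_left
  intro pr _
  simp [Algebra.TensorProduct.tmul_mul_tmul]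

lemma delta_fo (l : List RT) : delta (fo l) = Ssum l := by
  induction l with
  | nil =>
      rw [fo_nil, map_one, Ssum, childChoices_nil]
      simp [fo_nil, Algebra.TensorProduct.one_def]
  | cons c rest ih =>
      rw [fo_cons, map_mul, ih]
      have hX : delta (X c) = deltaGen c := aeval_X _ _
      rw [hX, deltaGen, add_mul]
      simp only [Ssum]
      rw [childChoices_cons, List.map_append, List.sum_append]
      congr 1
      · rw [delta_one_tmul_mul, List.map_map]
        rfl
      · rw [list_sum_mul]
        rw [List.map_flatMap]
        congr 1
        congr 1
        funext qs
        rw [List.map_map]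
        apply List.map_congr_left
        intro pr _
        simp [Algebra.TensorProduct.tmul_mul_tmul, fo_cons]

/-- Cocycle identity at a generator: `Δ(•_l) = •_l ⊗ 1 + (id ⊗ B₊)(Δ(forest l))`. -/
lemma delta_X_node (l : List RT) :
    delta (X (RT.node l)) = X (RT.node l) ⊗ₜ[ℚ] 1 +
      LinearMap.lTensor HCK Bplus (delta (fo l)) := by
  have hX : delta (X (RT.node l)) = deltaGen (RT.node l) := aeval_X _ _
  rw [hX, deltaGen, delta_fo]
  congr 1
  rw [allCuts_node, List.map_map, Ssum,
    map_list_sum (LinearMap.lTensor HCK Bplus), List.map_map]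
  apply congrArg
  apply List.map_congr_left
  intro pr _
  simp only [Function.comp, LinearMap.lTensor_tmul]
  rw [Bplus_fo]

/-- The map `x ↦ x ⊗ 1`. -/
noncomputable def rOne : HCK →ₗ[ℚ] HCK ⊗[ℚ] HCK := (TensorProduct.mk ℚ HCK HCK).flip 1

@[simp] lemma rOne_apply (x : HCK) : rOne x = x ⊗ₜ[ℚ] 1 := rfl

/-- The Hochschild cocycle identity as an identity of linear maps. -/
lemma cocycleL : delta.toLinearMap ∘ₗ Bplus =
    rOne ∘ₗ Bplus + LinearMap.lTensor HCK Bplus ∘ₗ delta.toLinearMap := by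
  apply (basisMonomials RT ℚ).ext
  intro m
  simp only [coe_basisMonomials, LinearMap.add_apply, LinearMap.comp_apply,
    AlgHom.toLinearMap_apply, rOne_apply]
  rw [Bplus_monomial, delta_X_node, fo_toList]

noncomputable def assocL : (HCK ⊗[ℚ] HCK) ⊗[ℚ] HCK →ₗ[ℚ] HCK ⊗[ℚ] (HCK ⊗[ℚ] HCK) :=
  (TensorProduct.assoc ℚ HCK HCK HCK).toLinearMap

@[simp] lemma assocL_tmul (a b c : HCK) :
    assocL ((a ⊗ₜ[ℚ] b) ⊗ₜ[ℚ] c) = a ⊗ₜ[ℚ] (b ⊗ₜ[ℚ] c) := rfl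

/-- Naturality: `assoc ((a ⊗ b) ⊗ 1) = (id ⊗ rOne)(a ⊗ b)`. -/
lemma N1 (w : HCK ⊗[ℚ] HCK) :
    assocL (w ⊗ₜ[ℚ] (1 : HCK)) = LinearMap.lTensor HCK rOne w := by
  have : assocL ∘ₗ ((TensorProduct.mk ℚ (HCK ⊗[ℚ] HCK) HCK).flip 1)
      = LinearMap.lTensor HCK rOne := by
    apply TensorProduct.ext'
    intro a b
    simp [TensorProduct.mk_apply, LinearMap.flip_apply]
  exact LinearMap.congr_fun this w

/-- Naturality: `assoc ∘ (id ⊗ B₊) = (id ⊗ (id ⊗ B₊)) ∘ assoc` on the triple product. -/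
lemma N2 : assocL ∘ₗ LinearMap.lTensor (HCK ⊗[ℚ] HCK) Bplus
    = LinearMap.lTensor HCK (LinearMap.lTensor HCK Bplus) ∘ₗ assocL := by
  apply TensorProduct.ext_threefold
  intro a b c
  simp

noncomputable def Lmap : HCK →ₐ[ℚ] HCK ⊗[ℚ] (HCK ⊗[ℚ] HCK) :=
  (Algebra.TensorProduct.map (AlgHom.id ℚ HCK) delta).comp delta

noncomputable def Rmap : HCK →ₐ[ℚ] HCK ⊗[ℚ] (HCK ⊗[ℚ] HCK) :=
  ((Algebra.TensorProduct.assoc ℚ ℚ ℚ HCK HCK HCK : _ ≃ₐ[ℚ] _).toAlgHom.comp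
    ((Algebra.TensorProduct.map delta (AlgHom.id ℚ HCK)).comp delta))

lemma Lmap_eq (x : HCK) :
    Lmap x = LinearMap.lTensor HCK delta.toLinearMap (delta x) := by
  have h : (Algebra.TensorProduct.map (AlgHom.id ℚ HCK) delta).toLinearMap
      = LinearMap.lTensor HCK delta.toLinearMap := by
    apply TensorProduct.ext'
    intro a b
    simp
  calc Lmap x = (Algebra.TensorProduct.map (AlgHom.id ℚ HCK) delta).toLinearMap (delta x) := rfl
    _ = _ := by rw [h]

lemma Rmap_eq (x : HCK) :
    Rmap x = assocL (LinearMap.rTensor HCK delta.toLinearMap (delta x)) := by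
  have h1 : (Algebra.TensorProduct.map delta (AlgHom.id ℚ HCK)).toLinearMap
      = LinearMap.rTensor HCK delta.toLinearMap := by
    apply TensorProduct.ext'
    intro a b
    simp
  have h2 : (Algebra.TensorProduct.assoc ℚ ℚ ℚ HCK HCK HCK : _ ≃ₐ[ℚ] _).toAlgHom.toLinearMap
      = assocL := by
    apply TensorProduct.ext_threefold
    intro a b c
    simp [Algebra.TensorProduct.assoc_tmul]
  calc Rmap x = (Algebra.TensorProduct.assoc ℚ ℚ ℚ HCK HCK HCK : _ ≃ₐ[ℚ] _).toAlgHom.toLinearMap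
        ((Algebra.TensorProduct.map delta (AlgHom.id ℚ HCK)).toLinearMap (delta x)) := rfl
    _ = _ := by rw [h1, h2]

/-- The key inductive step, via the cocycle identity. -/
lemma step (t : RT) (z : HCK ⊗[ℚ] HCK)
    (hd : delta (X t) = X t ⊗ₜ[ℚ] 1 + LinearMap.lTensor HCK Bplus z)
    (hz : LinearMap.lTensor HCK delta.toLinearMap z
      = assocL (LinearMap.rTensor HCK delta.toLinearMap z)) :
    LinearMap.lTensor HCK delta.toLinearMap (delta (X t))
      = assocL (LinearMap.rTensor HCK delta.toLinearMap (delta (X t))) := by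
  have h4 : LinearMap.lTensor HCK delta.toLinearMap (X t ⊗ₜ[ℚ] (1:HCK))
      = X t ⊗ₜ[ℚ] ((1:HCK) ⊗ₜ[ℚ] (1:HCK)) := by
    rw [LinearMap.lTensor_tmul, AlgHom.toLinearMap_apply, map_one,
      Algebra.TensorProduct.one_def]
  have h5 : LinearMap.lTensor HCK delta.toLinearMap (LinearMap.lTensor HCK Bplus z)
      = LinearMap.lTensor HCK rOne (LinearMap.lTensor HCK Bplus z)
        + LinearMap.lTensor HCK (LinearMap.lTensor HCK Bplus)
            (LinearMap.lTensor HCK delta.toLinearMap z) := by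
    rw [← LinearMap.comp_apply, ← LinearMap.lTensor_comp, cocycleL, LinearMap.lTensor_add,
      LinearMap.lTensor_comp, LinearMap.lTensor_comp, LinearMap.add_apply,
      LinearMap.comp_apply, LinearMap.comp_apply]
  have h6 : assocL (LinearMap.rTensor HCK delta.toLinearMap (X t ⊗ₜ[ℚ] (1:HCK)))
      = X t ⊗ₜ[ℚ] ((1:HCK) ⊗ₜ[ℚ] (1:HCK))
        + LinearMap.lTensor HCK rOne (LinearMap.lTensor HCK Bplus z) := by
    rw [LinearMap.rTensor_tmul, AlgHom.toLinearMap_apply, hd, add_tmul, map_add,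
      assocL_tmul, N1]
  have h7 : assocL (LinearMap.rTensor HCK delta.toLinearMap (LinearMap.lTensor HCK Bplus z))
      = LinearMap.lTensor HCK (LinearMap.lTensor HCK Bplus)
          (LinearMap.lTensor HCK delta.toLinearMap z) := by
    have hcomm : LinearMap.rTensor HCK delta.toLinearMap ∘ₗ LinearMap.lTensor HCK Bplus
        = LinearMap.lTensor (HCK ⊗[ℚ] HCK) Bplus ∘ₗ LinearMap.rTensor HCK delta.toLinearMap := by
      rw [LinearMap.rTensor_comp_lTensor, LinearMap.lTensor_comp_rTensor]
    have h8 := LinearMap.congr_fun hcomm z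
    simp only [LinearMap.comp_apply] at h8
    have h9 := LinearMap.congr_fun N2 (LinearMap.rTensor HCK delta.toLinearMap z)
    simp only [LinearMap.comp_apply] at h9
    rw [h8, h9, ← hz]
  rw [hd, map_add, map_add, map_add, h4, h5, h6, h7]
  abel

lemma gen_coassoc : ∀ (n : ℕ) (t : RT), sizeOf t ≤ n → Lmap (X t) = Rmap (X t) := by
  intro n
  induction n with
  | zero =>
      intro t h
      cases t with
      | node l => simp only [RT.node.sizeOf_spec] at h; omega
  | succ n ih =>
      intro t h
      cases t with
      | node l =>
        have hf : Lmap (fo l) = Rmap (fo l) := by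
          unfold fo
          rw [← AlgHom.coe_toRingHom Lmap, ← AlgHom.coe_toRingHom Rmap,
            map_list_prod, map_list_prod, List.map_map, List.map_map]
          congr 1
          apply List.map_congr_left
          intro c hc
          simp only [Function.comp, AlgHom.coe_toRingHom]
          have h1 : sizeOf c < sizeOf l := List.sizeOf_lt_of_mem hc
          have h2 : sizeOf (RT.node l) = 1 + sizeOf l := RT.node.sizeOf_spec l
          exact ih c (by omega)
        rw [Lmap_eq, Rmap_eq]
        apply step (RT.node l) (delta (fo l)) (delta_X_node l)
        rw [Lmap_eq, Rmap_eq] at hf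
        exact hf

lemma Lmap_eq_Rmap : Lmap = Rmap :=
  algHom_ext fun t => gen_coassoc (sizeOf t) t le_rfl

/-- The admissible-cut coproduct on the Connes-Kreimer Hopf algebra of rooted trees is
coassociative. -/
theorem stmt_12 (x : HCK) :
    LinearMap.lTensor HCK delta.toLinearMap (delta x) =
      TensorProduct.assoc ℚ HCK HCK HCK
        (LinearMap.rTensor HCK delta.toLinearMap (delta x)) := by
  have h : Lmap x = Rmap x := by rw [Lmap_eq_Rmap]
  rw [Lmap_eq, Rmap_eq] at h
  exact h
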